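/- Pareto characterization for matchings: given a complete bipartite graph K_{n,n} with strict rankings r_i of the n items for each of n agents, a perfect matching μ can be produced by a serial dictatorship (some action sequence, with each agent picking her top-ranked available item) if and only if μ is Pareto-optimal, i.e., there is no perfect matching μ' with r_i(μ'_i) ≤ r_i(μ_i) for all agents i and strict inequality for at least one agent. -/

import Mathlib

/-- The agents that precede `i` in the action (sub)sequence `π`. -/
def prefixBefore {n : ℕ} (π : List (Fin n)) (i : Fin n) : List (Fin n) :=
  π.takeWhile (fun j => j != i)

/-- A full action sequence: an ordering of all `n` agents. -/
def IsSeq {n : ℕ} (π : List (Fin n)) : Prop :=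
  π.Nodup ∧ ∀ i : Fin n, i ∈ π

/-- The serial dictatorship with ordering `π` produces the perfect matching `μ`:
every agent's item is her top-ranked item among those not taken by her predecessors. -/
def ProducedM {n : ℕ} (r : Fin n → Fin n → ℕ) (π : List (Fin n))
    (μ : Equiv.Perm (Fin n)) : Prop :=
  ∀ i j : Fin n, j ∉ (prefixBefore π i).map (fun k => μ k) → r i (μ i) ≤ r i j

/-- `μ` is Pareto-optimal w.r.t. the strict rankings `r`. -/
def ParetoOptM {n : ℕ} (r : Fin n → Fin n → ℕ) (μ : Equiv.Perm (Fin n)) : Prop :=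
  ¬ ∃ μ' : Equiv.Perm (Fin n),
      (∀ i, r i (μ' i) ≤ r i (μ i)) ∧ ∃ i, r i (μ' i) < r i (μ i)

lemma prefixBefore_cons_self {n : ℕ} (a : Fin n) (π : List (Fin n)) :
    prefixBefore (a :: π) a = [] := by
  simp [prefixBefore]

lemma prefixBefore_cons_ne {n : ℕ} {a i : Fin n} (h : a ≠ i) (π : List (Fin n)) :
    prefixBefore (a :: π) i = a :: prefixBefore π i := by
  simp [prefixBefore, List.takeWhile_cons, h]

/-- Core of the forward direction. -/
lemma forward_aux {n : ℕ} (r : Fin n → Fin n → ℕ) (hr : ∀ i, Function.Injective (r i))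
    (μ μ' : Equiv.Perm (Fin n)) (hle : ∀ i, r i (μ' i) ≤ r i (μ i)) :
    ∀ (π : List (Fin n)) (T : Set (Fin n)), π.Nodup →
      (∀ i ∈ π, μ' i ∉ T) →
      (∀ i ∈ π, ∀ j, j ∉ T → j ∉ (prefixBefore π i).map (fun k => μ k) → r i (μ i) ≤ r i j) →
      ∀ i ∈ π, μ' i = μ i := by
  intro π
  induction π with
  | nil => simp
  | cons a rest ih =>
    intro T hnd hT hH i hi
    have hnda : a ∉ rest := (List.nodup_cons.mp hnd).1
    have hndr : rest.Nodup := (List.nodup_cons.mp hnd).2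
    have ha : μ' a = μ a := by
      have h1 : r a (μ a) ≤ r a (μ' a) := by
        apply hH a List.mem_cons_self (μ' a) (hT a List.mem_cons_self)
        simp [prefixBefore_cons_self]
      exact hr a (le_antisymm (hle a) h1)
    rcases List.mem_cons.mp hi with rfl | hi'
    · exact ha
    · refine ih (insert (μ a) T) hndr ?_ ?_ i hi'
      · intro k hk
        simp only [Set.mem_insert_iff, not_or]
        refine ⟨?_, hT k (List.mem_cons_of_mem a hk)⟩
        rw [← ha]
        intro hcontra
        exact hnda (by
          have : k = a := μ'.injective hcontra
          exact this ▸ hk)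
      · intro k hk j hj hjp
        have hka : a ≠ k := fun h => hnda (h ▸ hk)
        apply hH k (List.mem_cons_of_mem a hk) j (fun h => hj (Set.mem_insert_of_mem _ h))
        rw [prefixBefore_cons_ne hka]
        simp only [List.map_cons, List.mem_cons, not_or]
        refine ⟨fun h => hj ?_, hjp⟩
        · exact h ▸ Set.mem_insert _ _

/-- If `μ` is Pareto-optimal, every nonempty set of agents has a "top" agent:
one whose item is best for her among the items of the set. -/
lemma exists_top_agent {n : ℕ} (r : Fin n → Fin n → ℕ)
    (μ : Equiv.Perm (Fin n)) (hpo : ParetoOptM r μ)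
    (S : Finset (Fin n)) (hS : S.Nonempty) :
    ∃ i ∈ S, ∀ j ∈ S, r i (μ i) ≤ r i (μ j) := by
  classical
  by_contra hcon
  push_neg at hcon
  choose! f hfS hflt using hcon
  -- extend f to be the identity outside S
  set g : Fin n → Fin n := fun i => if i ∈ S then f i else i with hg
  have hgS : ∀ i ∈ S, g i ∈ S := by intro i hi; simp only [hg, if_pos hi]; exact hfS i hi
  have hglt : ∀ i ∈ S, r i (μ (g i)) < r i (μ i) := by
    intro i hi; simp only [hg, if_pos hi]; exact hflt i hi
  obtain ⟨c₀, hc₀⟩ := hS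
  have hiter : ∀ t : ℕ, g^[t] c₀ ∈ S := by
    intro t
    induction t with
    | zero => simpa
    | succ t iht => rw [Function.iterate_succ_apply']; exact hgS _ iht
  -- pigeonhole: two iterates coincide
  obtain ⟨a, b, hab, heq⟩ :=
    Finite.exists_ne_map_eq_of_infinite (fun t : ℕ => g^[t] c₀)
  wlog hlt : a < b generalizing a b
  · exact this b a hab.symm heq.symm (by omega)
  set p : ℕ := b - a with hp
  have hppos : 0 < p := by omega
  set c : Fin n := g^[a] c₀ with hc
  have hcycle : g^[p] c = c := by
    rw [hc, ← Function.iterate_add_apply, hp]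
    have : b - a + a = b := by omega
    rw [this]
    exact heq.symm
  -- the orbit of c
  set O : Finset (Fin n) := (Finset.range p).image (fun t => g^[t] c) with hO
  have hcO : c ∈ O := by
    rw [hO]; exact Finset.mem_image.mpr ⟨0, Finset.mem_range.mpr hppos, rfl⟩
  have hOS : ∀ x ∈ O, x ∈ S := by
    intro x hx
    obtain ⟨t, _, rfl⟩ := Finset.mem_image.mp hx
    rw [hc, ← Function.iterate_add_apply]
    exact hiter _
  have hmaps : ∀ x ∈ O, g x ∈ O := by
    intro x hx
    obtain ⟨t, ht, rfl⟩ := Finset.mem_image.mp hx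
    have hstep : g (g^[t] c) = g^[t+1] c := (Function.iterate_succ_apply' g t c).symm
    rw [hstep]
    rcases eq_or_lt_of_le (Nat.succ_le_of_lt (Finset.mem_range.mp ht)) with h | h
    · rw [show t + 1 = p from h, hcycle]; exact hcO
    · exact Finset.mem_image.mpr ⟨t + 1, Finset.mem_range.mpr h, rfl⟩
  have hsurj : ∀ y ∈ O, ∃ x ∈ O, g x = y := by
    intro y hy
    obtain ⟨t, ht, rfl⟩ := Finset.mem_image.mp hy
    have ht' := Finset.mem_range.mp ht
    rcases Nat.eq_zero_or_pos t with rfl | htpos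
    · refine ⟨g^[p - 1] c, ?_, ?_⟩
      · exact Finset.mem_image.mpr ⟨p - 1, Finset.mem_range.mpr (by omega), rfl⟩
      · have hstep : g (g^[p-1] c) = g^[p-1+1] c := (Function.iterate_succ_apply' g _ c).symm
        have hpp : p - 1 + 1 = p := by omega
        rw [hstep, hpp, hcycle]
        simp
    · refine ⟨g^[t - 1] c, ?_, ?_⟩
      · exact Finset.mem_image.mpr ⟨t - 1, Finset.mem_range.mpr (by omega), rfl⟩
      · have hstep : g (g^[t-1] c) = g^[t-1+1] c := (Function.iterate_succ_apply' g _ c).symm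
        rw [hstep]
        congr 1
        omega
  have hinjO : ∀ ⦃x⦄, x ∈ O → ∀ ⦃y⦄, y ∈ O → g x = g y → x = y := by
    have := Finset.inj_on_of_surj_on_of_card_le (s := O) (t := O)
      (fun a _ => g a) (fun a ha => hmaps a ha)
      (fun b hb => by obtain ⟨x, hx, hgx⟩ := hsurj b hb; exact ⟨x, hx, hgx⟩) le_rfl
    intro x hx y hy hxy
    exact this hx hy hxy
  -- the swap function: g on the orbit, identity elsewhere
  set w : Fin n → Fin n := fun x => if x ∈ O then g x else x with hw
  have hwinj : Function.Injective w := by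
    intro x y hxy
    simp only [hw] at hxy
    by_cases hx : x ∈ O <;> by_cases hy : y ∈ O
    · rw [if_pos hx, if_pos hy] at hxy; exact hinjO hx hy hxy
    · rw [if_pos hx, if_neg hy] at hxy; exact absurd (hxy ▸ hmaps x hx) hy
    · rw [if_neg hx, if_pos hy] at hxy; exact absurd (hxy.symm ▸ hmaps y hy) hx
    · rw [if_neg hx, if_neg hy] at hxy; exact hxy
  let σ : Equiv.Perm (Fin n) := Equiv.ofBijective w (Finite.injective_iff_bijective.mp hwinj)
  refine hpo ⟨σ.trans μ, ?_, ⟨c, ?_⟩⟩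
  · intro i
    simp only [Equiv.trans_apply, Equiv.ofBijective_apply, σ]
    by_cases hi : i ∈ O
    · show r i (μ (w i)) ≤ _
      simp only [hw, if_pos hi]
      exact le_of_lt (hglt i (hOS i hi))
    · show r i (μ (w i)) ≤ _
      simp only [hw, if_neg hi]
      exact le_rfl
  · show r c (μ (w c)) < _
    simp only [hw, if_pos hcO]
    exact hglt c (hOS c hcO)

/-- Backward construction: build a serial-dictatorship order on any finite set of agents. -/
lemma build_order {n : ℕ} (r : Fin n → Fin n → ℕ)
    (μ : Equiv.Perm (Fin n)) (hpo : ParetoOptM r μ) :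
    ∀ S : Finset (Fin n), ∃ π : List (Fin n), π.Nodup ∧ (∀ i, i ∈ π ↔ i ∈ S) ∧
      ∀ i ∈ π, ∀ k ∈ π, k ∉ prefixBefore π i → r i (μ i) ≤ r i (μ k) := by
  classical
  intro S
  induction S using Finset.strongInduction with
  | _ S ih =>
    rcases S.eq_empty_or_nonempty with rfl | hS
    · exact ⟨[], by simp⟩
    · obtain ⟨a, haS, hatop⟩ := exists_top_agent r μ hpo S hS
      obtain ⟨π', hnd', hmem', hinv'⟩ := ih (S.erase a) (Finset.erase_ssubset haS)
      have hna : a ∉ π' := fun h => (Finset.mem_erase.mp ((hmem' a).mp h)).1 rfl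
      refine ⟨a :: π', List.nodup_cons.mpr ⟨hna, hnd'⟩, ?_, ?_⟩
      · intro i
        rw [List.mem_cons, hmem', Finset.mem_erase]
        constructor
        · rintro (rfl | ⟨_, h⟩)
          · exact haS
          · exact h
        · intro h
          by_cases hia : i = a
          · exact Or.inl hia
          · exact Or.inr ⟨hia, h⟩
      · intro i hi k hk hkp
        rcases List.mem_cons.mp hi with rfl | hi'
        · apply hatop
          rcases List.mem_cons.mp hk with rfl | hk'
          · exact haS
          · exact (Finset.mem_erase.mp ((hmem' k).mp hk')).2
        · have hai : a ≠ i := fun h => hna (h ▸ hi')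
          rw [prefixBefore_cons_ne hai] at hkp
          simp only [List.mem_cons, not_or] at hkp
          rcases List.mem_cons.mp hk with rfl | hk'
          · exact absurd rfl hkp.1
          · exact hinv' i hi' k hk' hkp.2

/-- a perfect matching can be produced by a serial dictatorship iff it
is Pareto-optimal. -/
theorem stmt11 {n : ℕ} (r : Fin n → Fin n → ℕ) (hr : ∀ i, Function.Injective (r i))
    (μ : Equiv.Perm (Fin n)) :
    (∃ π, IsSeq π ∧ ProducedM r π μ) ↔ ParetoOptM r μ := by
  constructor
  · rintro ⟨π, ⟨hnd, hall⟩, hprod⟩ ⟨μ', hle, i₀, hlt⟩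
    have := forward_aux r hr μ μ' hle π ∅ hnd (by simp) ?_ i₀ (hall i₀)
    · rw [this] at hlt; exact lt_irrefl _ hlt
    · intro i _ j _ hj
      exact hprod i j hj
  · intro hpo
    obtain ⟨π, hnd, hmem, hinv⟩ := build_order r μ hpo Finset.univ
    refine ⟨π, ⟨hnd, fun i => (hmem i).mpr (Finset.mem_univ i)⟩, ?_⟩
    intro i j hj
    have hk : μ.symm j ∉ prefixBefore π i := by
      intro h
      exact hj (List.mem_map.mpr ⟨μ.symm j, h, by simp⟩)
    have := hinv i ((hmem i).mpr (Finset.mem_univ i)) (μ.symm j)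
      ((hmem _).mpr (Finset.mem_univ _)) hk
    simpa using this
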